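/- arXiv:2011.10828 — 3 statements merged into one kernel-verified Lean document; each statement's English description precedes it below -/
import Mathlib

section
/- Let 0 < s < 1 and B, μ > 0. Then ∫_0^∞ (μ/((1+ρ) sinh(ρμ/(1+ρ))))² · (sinh(ρμ/(1+ρ)) / sinh(μ/(1+ρ)))^s · exp(-Bμ/tanh(ρμ/(1+ρ))) dρ = B^{s-1} (μ/sinh μ)^s Γ(1-s) exp(-Bμ/tanh μ). -/
open Real MeasureTheory Set Filter Topology

noncomputable def tauS2 (B μ ρ : ℝ) : ℝ :=
  B * μ / Real.sinh μ * (Real.sinh (μ / (1 + ρ)) / Real.sinh (ρ * μ / (1 + ρ)))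

lemma tauS2_pos {B μ : ℝ} (hB : 0 < B) (hμ : 0 < μ) {ρ : ℝ} (hρ : 0 < ρ) :
    0 < tauS2 B μ ρ := by
  have h1ρ : (0:ℝ) < 1 + ρ := by linarith
  have hsa : 0 < Real.sinh (μ / (1 + ρ)) := Real.sinh_pos_iff.2 (by positivity)
  have hsb : 0 < Real.sinh (ρ * μ / (1 + ρ)) := Real.sinh_pos_iff.2 (by positivity)
  have hsμ : 0 < Real.sinh μ := Real.sinh_pos_iff.2 hμ
  unfold tauS2
  positivity

lemma tauS2_hasDerivAt (B μ : ℝ) (hB : 0 < B) (hμ : 0 < μ) {ρ : ℝ} (hρ : 0 < ρ) :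
    HasDerivAt (tauS2 B μ)
      (-(B * (μ / ((1 + ρ) * Real.sinh (ρ * μ / (1 + ρ)))) ^ 2)) ρ := by
  have h1ρ : (0:ℝ) < 1 + ρ := by linarith
  have hsb : Real.sinh (ρ * μ / (1 + ρ)) ≠ 0 :=
    (Real.sinh_pos_iff.2 (by positivity)).ne'
  have hsμ : Real.sinh μ ≠ 0 := (Real.sinh_pos_iff.2 hμ).ne'
  have hd : HasDerivAt (fun ρ : ℝ => 1 + ρ) 1 ρ := by
    simpa using (hasDerivAt_id ρ).const_add 1
  have ha : HasDerivAt (fun ρ : ℝ => μ / (1 + ρ))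
      ((0 * (1 + ρ) - μ * 1) / (1 + ρ) ^ 2) ρ :=
    (hasDerivAt_const ρ μ).div hd h1ρ.ne'
  have hb : HasDerivAt (fun ρ : ℝ => ρ * μ / (1 + ρ))
      ((1 * μ * (1 + ρ) - ρ * μ * 1) / (1 + ρ) ^ 2) ρ :=
    ((hasDerivAt_id ρ).mul_const μ).div hd h1ρ.ne'
  have hq := (ha.sinh.div hb.sinh hsb).const_mul (B * μ / Real.sinh μ)
  have hμeq : μ / (1 + ρ) + ρ * μ / (1 + ρ) = μ := by field_simp
  have hsum : Real.sinh μ =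
      Real.sinh (μ / (1 + ρ)) * Real.cosh (ρ * μ / (1 + ρ))
        + Real.cosh (μ / (1 + ρ)) * Real.sinh (ρ * μ / (1 + ρ))  := by
    have := Real.sinh_add (μ / (1 + ρ)) (ρ * μ / (1 + ρ))
    rw [hμeq] at this
    exact this
  have hsum_ne : Real.sinh (μ / (1 + ρ)) * Real.cosh (ρ * μ / (1 + ρ))
        + Real.cosh (μ / (1 + ρ)) * Real.sinh (ρ * μ / (1 + ρ)) ≠ 0 := by
    rw [← hsum]; exact hsμ
  refine hq.congr_deriv ?_
  rw [hsum]
  field_simp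
  ring

lemma tauS2_exp_id (B μ : ℝ) (hB : 0 < B) (hμ : 0 < μ) {ρ : ℝ} (hρ : 0 < ρ) :
    -(B * μ) / Real.tanh (ρ * μ / (1 + ρ)) = -(B * μ) / Real.tanh μ - tauS2 B μ ρ := by
  have h1ρ : (0:ℝ) < 1 + ρ := by linarith
  have hsb : Real.sinh (ρ * μ / (1 + ρ)) ≠ 0 :=
    (Real.sinh_pos_iff.2 (by positivity)).ne'
  have hcb : Real.cosh (ρ * μ / (1 + ρ)) ≠ 0 := (Real.cosh_pos _).ne'
  have hsμ : Real.sinh μ ≠ 0 := (Real.sinh_pos_iff.2 hμ).ne'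
  have hcμ : Real.cosh μ ≠ 0 := (Real.cosh_pos _).ne'
  have haeq : μ / (1 + ρ) = μ - ρ * μ / (1 + ρ) := by field_simp; ring
  unfold tauS2
  rw [Real.tanh_eq_sinh_div_cosh, Real.tanh_eq_sinh_div_cosh, haeq, Real.sinh_sub]
  field_simp
  ring

lemma tauS2_contOn (B μ : ℝ) (hB : 0 < B) (hμ : 0 < μ) :
    ContinuousOn (tauS2 B μ) (Ioi 0) := fun x hx =>
  (tauS2_hasDerivAt B μ hB hμ hx).continuousAt.continuousWithinAt

lemma tauS2_anti (B μ : ℝ) (hB : 0 < B) (hμ : 0 < μ) :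
    StrictAntiOn (tauS2 B μ) (Ioi 0) := by
  apply strictAntiOn_of_deriv_neg (convex_Ioi 0) (tauS2_contOn B μ hB hμ)
  intro x hx
  rw [interior_Ioi] at hx
  have hx0 : (0:ℝ) < x := hx
  rw [(tauS2_hasDerivAt B μ hB hμ hx0).deriv]
  have h1x : (0:ℝ) < 1 + x := by linarith
  have hsb : 0 < Real.sinh (x * μ / (1 + x)) := Real.sinh_pos_iff.2 (by positivity)
  have ht : 0 < μ / ((1 + x) * Real.sinh (x * μ / (1 + x))) := div_pos hμ (mul_pos h1x hsb)
  have : 0 < B * (μ / ((1 + x) * Real.sinh (x * μ / (1 + x)))) ^ 2 :=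
    mul_pos hB (pow_pos ht 2)
  linarith

lemma tauS2_image (B μ : ℝ) (hB : 0 < B) (hμ : 0 < μ) :
    tauS2 B μ '' Ioi 0 = Ioi 0 := by
  have hsμ : 0 < Real.sinh μ := Real.sinh_pos_iff.2 hμ
  apply Subset.antisymm
  · rintro _ ⟨ρ, hρ, rfl⟩
    exact tauS2_pos hB hμ hρ
  · intro y hy
    have hy0 : 0 < y := hy
    -- tendsto atTop at 0⁺
    have hinner0 : Tendsto (fun ρ : ℝ => Real.sinh (ρ * μ / (1 + ρ))) (𝓝[>] 0) (𝓝[>] 0) := by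
      apply tendsto_nhdsWithin_of_tendsto_nhds_of_eventually_within
      · have hc : ContinuousAt (fun ρ : ℝ => Real.sinh (ρ * μ / (1 + ρ))) 0 := by
          apply Real.continuous_sinh.continuousAt.comp
          exact ContinuousAt.div (continuousAt_id.mul continuousAt_const)
            (continuousAt_const.add continuousAt_id) (by norm_num)
        have := hc.tendsto
        simp only [zero_mul, zero_div, Real.sinh_zero, add_zero] at this
        exact this.mono_left nhdsWithin_le_nhds
      · exact eventually_mem_nhdsWithin.mono fun ρ hρ => by
          have hρ' : (0:ℝ) < ρ := hρ
          have : (0:ℝ) < 1 + ρ := by linarith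
          exact Real.sinh_pos_iff.2 (by positivity)
    have hnum : Tendsto (fun ρ : ℝ => B * μ / Real.sinh μ * Real.sinh (μ / (1 + ρ)))
        (𝓝[>] 0) (𝓝 (B * μ / Real.sinh μ * Real.sinh μ)) := by
      have hc : ContinuousAt (fun ρ : ℝ => B * μ / Real.sinh μ * Real.sinh (μ / (1 + ρ))) 0 := by
        apply ContinuousAt.mul continuousAt_const
        apply Real.continuous_sinh.continuousAt.comp
        exact ContinuousAt.div continuousAt_const (continuousAt_const.add continuousAt_id)
          (by norm_num)
      have := hc.tendsto
      simp only [add_zero, div_one] at this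
      exact this.mono_left nhdsWithin_le_nhds
    have htop : Tendsto (tauS2 B μ) (𝓝[>] 0) atTop := by
      have hpos : 0 < B * μ / Real.sinh μ * Real.sinh μ := by positivity
      have := hnum.pos_mul_atTop hpos (tendsto_inv_nhdsGT_zero.comp hinner0)
      refine this.congr fun ρ => ?_
      simp [tauS2, div_eq_mul_inv, mul_assoc, Function.comp]
    -- tendsto 0 at ∞
    have hbot : Tendsto (tauS2 B μ) atTop (𝓝 0) := by
      have he : Tendsto (fun ρ : ℝ => μ / (1 + ρ)) atTop (𝓝 0) :=
        Tendsto.div_atTop tendsto_const_nhds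
          (tendsto_atTop_add_const_left atTop 1 tendsto_id)
      have hnum2 : Tendsto (fun ρ : ℝ => Real.sinh (μ / (1 + ρ))) atTop (𝓝 0) := by
        have := (Real.continuous_sinh.tendsto 0).comp he
        simpa [Function.comp_def] using this
      have hden2 : Tendsto (fun ρ : ℝ => Real.sinh (ρ * μ / (1 + ρ))) atTop (𝓝 (Real.sinh μ)) := by
        have hb2 : Tendsto (fun ρ : ℝ => ρ * μ / (1 + ρ)) atTop (𝓝 μ) := by
          have : ∀ᶠ ρ : ℝ in atTop, μ - μ / (1 + ρ) = ρ * μ / (1 + ρ) := by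
            filter_upwards [eventually_gt_atTop (0:ℝ)] with ρ hρ
            have : (0:ℝ) < 1 + ρ := by linarith
            field_simp
            ring
          refine Tendsto.congr' this ?_
          have := tendsto_const_nhds.sub he (α := ℝ) (f := fun _ : ℝ => μ)
          simpa using this
        exact (Real.continuous_sinh.tendsto μ).comp hb2
      have := (hnum2.div hden2 hsμ.ne').const_mul (B * μ / Real.sinh μ)
      simp at this; exact this
    -- pick endpoints and apply IVT
    obtain ⟨ρ₁, hρ₁y, hρ₁pos⟩ :=
      ((htop.eventually_gt_atTop y).and eventually_mem_nhdsWithin).exists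
    obtain ⟨ρ₂, hρ₂y, hρ₂ge⟩ :=
      ((hbot.eventually (gt_mem_nhds hy0)).and (eventually_ge_atTop ρ₁)).exists
    have hsub : Icc ρ₁ ρ₂ ⊆ Ioi 0 := fun x hx => lt_of_lt_of_le hρ₁pos hx.1
    have hivt := intermediate_value_Icc' hρ₂ge ((tauS2_contOn B μ hB hμ).mono hsub)
    have hymem : y ∈ Icc (tauS2 B μ ρ₂) (tauS2 B μ ρ₁) := ⟨le_of_lt hρ₂y, le_of_lt hρ₁y⟩
    obtain ⟨c, hc, hcy⟩ := hivt hymem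
    exact ⟨c, hsub hc, hcy⟩

theorem stmt_2 (s : ℝ) (hs0 : 0 < s) (hs1 : s < 1) (B μ : ℝ) (hB : 0 < B) (hμ : 0 < μ) :
    ∫ ρ in Ioi (0:ℝ),
        (μ / ((1+ρ) * Real.sinh (ρ*μ/(1+ρ))))^2
          * (Real.sinh (ρ*μ/(1+ρ)) / Real.sinh (μ/(1+ρ))) ^ s
          * Real.exp (-(B*μ) / Real.tanh (ρ*μ/(1+ρ)))
      = B ^ (s - 1) * (μ / Real.sinh μ) ^ s * Real.Gamma (1 - s)
          * Real.exp (-(B*μ) / Real.tanh μ) := by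
  have hsμ : 0 < Real.sinh μ := Real.sinh_pos_iff.2 hμ
  set C : ℝ := B * μ / Real.sinh μ with hC
  have hCpos : 0 < C := by positivity
  set K : ℝ := C ^ s * Real.exp (-(B*μ) / Real.tanh μ) / B with hK
  set g : ℝ → ℝ := fun x => Real.exp (-x) * x ^ (-s) with hg
  have key : ∀ ρ ∈ Ioi (0:ℝ),
      (μ / ((1+ρ) * Real.sinh (ρ*μ/(1+ρ))))^2
          * (Real.sinh (ρ*μ/(1+ρ)) / Real.sinh (μ/(1+ρ))) ^ s
          * Real.exp (-(B*μ) / Real.tanh (ρ*μ/(1+ρ)))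
        = K * (|-(B * (μ / ((1 + ρ) * Real.sinh (ρ * μ / (1 + ρ)))) ^ 2)| •
            g (tauS2 B μ ρ)) := by
    intro ρ hρ
    have hρ0 : 0 < ρ := hρ
    have h1ρ : (0:ℝ) < 1 + ρ := by linarith
    have hsa : 0 < Real.sinh (μ / (1 + ρ)) := Real.sinh_pos_iff.2 (by positivity)
    have hsb : 0 < Real.sinh (ρ * μ / (1 + ρ)) := Real.sinh_pos_iff.2 (by positivity)
    have habs : |-(B * (μ / ((1 + ρ) * Real.sinh (ρ * μ / (1 + ρ)))) ^ 2)|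
        = B * (μ / ((1 + ρ) * Real.sinh (ρ * μ / (1 + ρ)))) ^ 2 := by
      rw [abs_neg, abs_of_nonneg (by positivity)]
    have hτpos : 0 < tauS2 B μ ρ := tauS2_pos hB hμ hρ0
    have hexp : Real.exp (-(B*μ) / Real.tanh (ρ*μ/(1+ρ)))
        = Real.exp (-(B*μ) / Real.tanh μ) * Real.exp (-(tauS2 B μ ρ)) := by
      rw [← Real.exp_add, ← sub_eq_add_neg, ← tauS2_exp_id B μ hB hμ hρ0]
    have hrpow : (Real.sinh (ρ*μ/(1+ρ)) / Real.sinh (μ/(1+ρ))) ^ s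
        = C ^ s * (tauS2 B μ ρ) ^ (-s) := by
      have h1 : tauS2 B μ ρ = C * (Real.sinh (μ/(1+ρ)) / Real.sinh (ρ*μ/(1+ρ))) := rfl
      have h2 : (Real.sinh (ρ*μ/(1+ρ)) / Real.sinh (μ/(1+ρ))) ^ s
          = (Real.sinh (μ/(1+ρ)) / Real.sinh (ρ*μ/(1+ρ))) ^ (-s) := by
        rw [Real.rpow_neg (by positivity), ← Real.inv_rpow (by positivity), inv_div]
      rw [h2, h1, Real.mul_rpow hCpos.le (by positivity), ← mul_assoc,
        ← Real.rpow_add hCpos]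
      norm_num
    rw [habs, hexp, hrpow, hg, hK]
    simp only [smul_eq_mul]
    have hBne : B ≠ 0 := hB.ne'
    field_simp
  rw [MeasureTheory.setIntegral_congr_fun (by exact measurableSet_Ioi) key]
  rw [MeasureTheory.integral_const_mul]
  rw [← MeasureTheory.integral_image_eq_integral_abs_deriv_smul measurableSet_Ioi
      (fun x hx => (tauS2_hasDerivAt B μ hB hμ hx).hasDerivWithinAt)
      ((tauS2_anti B μ hB hμ).injOn) g]
  rw [tauS2_image B μ hB hμ]
  have hgamma : ∫ x in Ioi (0:ℝ), g x = Real.Gamma (1 - s) := by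
    rw [Real.Gamma_eq_integral (by linarith)]
    congr 1
    ext x
    rw [hg]
    norm_num
  rw [hgamma, hK, hC]
  rw [show B * μ / Real.sinh μ = B * (μ / Real.sinh μ) from mul_div_assoc _ _ _]
  rw [Real.mul_rpow hB.le (by positivity)]
  rw [show B ^ (s-1) = B ^ s / B by rw [Real.rpow_sub hB, Real.rpow_one]]
  ring
end

section
/- Define, for 0 < s < 1 and μ > 0, the function h_{s,μ}(ρ) = (μ/sinh μ)·(sinh(ρμ/(1+ρ))/sinh(μ/(1+ρ)))^s · [ (μ/sinh μ)·(ρ/(1+ρ)²)·( sinh(ρμ/(1+ρ))/sinh(μ/(1+ρ)) + 2cosh μ + sinh(μ/(1+ρ))/sinh(ρμ/(1+ρ)) ) − 1 ] for ρ > 0. Then for every ρ > 0, h'_{s,μ}(ρ) = ρ^s · d/dρ [ ((ρμ/(1+ρ))/sinh(ρμ/(1+ρ)))^{1−s} · ((μ/(1+ρ))/sinh(μ/(1+ρ)))^{1+s} ]. -/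
open Real

/-- The auxiliary function `h_{s,μ}` from Section 3 of the paper. -/
noncomputable def hFun (s μ ρ : ℝ) : ℝ :=
  (μ / Real.sinh μ) * (Real.sinh (ρ*μ/(1+ρ)) / Real.sinh (μ/(1+ρ))) ^ s *
    ((μ / Real.sinh μ) * (ρ/(1+ρ)^2) *
      (Real.sinh (ρ*μ/(1+ρ)) / Real.sinh (μ/(1+ρ)) + 2 * Real.cosh μ
        + Real.sinh (μ/(1+ρ)) / Real.sinh (ρ*μ/(1+ρ))) - 1)

lemma sinh_sq_sum (u v : ℝ) :
    Real.sinh (u+v)^2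
      = Real.sinh u^2 + Real.sinh v^2 + 2*Real.sinh u*Real.sinh v*Real.cosh (u+v) := by
  rw [Real.sinh_add, Real.cosh_add]
  linear_combination (Real.sinh u ^ 2) * Real.cosh_sq v + (Real.sinh v ^ 2) * Real.cosh_sq u

lemma E2aux (s x aa bb A B : ℝ) (hx : 0 < x) (ha : 0 < aa) (hb : 0 < bb)
    (hA : 0 < A) (hB : 0 < B) (hab : aa = x * bb) :
    (aa/A)^(1-s) * (bb/B)^(1+s) = x^(-s) * (A/B)^s * (aa*bb/(A*B)) := by
  have hprod : 0 < aa*bb/(A*B) := by positivity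
  have hlog : Real.log aa = Real.log x + Real.log bb := by
    rw [hab, Real.log_mul hx.ne' hb.ne']
  rw [Real.rpow_def_of_pos (div_pos ha hA), Real.rpow_def_of_pos (div_pos hb hB),
    Real.rpow_def_of_pos hx, Real.rpow_def_of_pos (div_pos hA hB),
    ← Real.exp_log hprod, ← Real.exp_add, ← Real.exp_add, ← Real.exp_add, Real.exp_eq_exp,
    Real.log_div ha.ne' hA.ne', Real.log_div hb.ne' hB.ne', Real.log_div hA.ne' hB.ne',
    Real.log_div (mul_pos ha hb).ne' (mul_pos hA hB).ne',
    Real.log_mul ha.ne' hb.ne', Real.log_mul hA.ne' hB.ne', hlog]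
  ring

lemma final_alg (c c2 W X D F P N M r t : ℝ) (hr : r ≠ 0)
    (h1 : N * P = 1) (h2 : M * P = 1/r) (h3 : c * c2 = 1)
    (hW : c * W * r = t * (X * F)) :
    c * W * (c2 * F - 1) + c * X * (c2 * D) = P * ((-t * M * X + N * W) * F + N * X * D) := by
  have hP : P ≠ 0 := by rintro rfl; simp at h1
  have hN : N = 1/P := eq_one_div_of_mul_eq_one_left h1
  have hM : M = 1/(r*P) := by
    field_simp
    field_simp at h2
    linear_combination h2
  subst hN
  subst hM
  have h4 : t / r * (X * F) = c * W := by
    field_simp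
    linear_combination -hW
  have hR : P * ((-t * (1/(r*P)) * X + (1/P) * W) * F + (1/P) * X * D)
      = -(t / r * (X * F)) + W*F + X*D := by
    field_simp
  rw [hR, h4]
  linear_combination (F*W + X*D) * h3

theorem stmt_5 (s μ : ℝ) (hs0 : 0 < s) (hs1 : s < 1) (hμ : 0 < μ) (ρ : ℝ) (hρ : 0 < ρ) :
    deriv (fun ρ' => hFun s μ ρ') ρ
      = ρ ^ s * deriv (fun ρ' =>
          ((ρ'*μ/(1+ρ')) / Real.sinh (ρ'*μ/(1+ρ'))) ^ (1 - s)
            * ((μ/(1+ρ')) / Real.sinh (μ/(1+ρ'))) ^ (1 + s)) ρ := by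
  have hS : 0 < Real.sinh μ := Real.sinh_pos_iff.mpr hμ
  -- the two replacement functions
  set w : ℝ → ℝ := fun x => (Real.sinh (x*μ/(1+x)) / Real.sinh (μ/(1+x))) ^ s with hw
  set Φ : ℝ → ℝ := fun x =>
    (x*μ/(1+x)) * (μ/(1+x)) / (Real.sinh (x*μ/(1+x)) * Real.sinh (μ/(1+x))) with hΦ
  -- eventual equality for the LHS
  have hev1 : (fun ρ' => hFun s μ ρ')
      =ᶠ[nhds ρ] (fun x => (μ/Real.sinh μ) * w x * ((Real.sinh μ/μ) * Φ x - 1)) := by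
    filter_upwards [eventually_gt_nhds hρ] with x hx
    have h1x : (0:ℝ) < 1 + x := by linarith
    have hax : 0 < x*μ/(1+x) := by positivity
    have hbx : 0 < μ/(1+x) := by positivity
    have hA : 0 < Real.sinh (x*μ/(1+x)) := Real.sinh_pos_iff.mpr hax
    have hB : 0 < Real.sinh (μ/(1+x)) := Real.sinh_pos_iff.mpr hbx
    have hab : x*μ/(1+x) + μ/(1+x) = μ := by field_simp; ring
    have hS2 : Real.sinh μ ^ 2 = Real.sinh (x*μ/(1+x))^2 + Real.sinh (μ/(1+x))^2
        + 2*Real.sinh (x*μ/(1+x))*Real.sinh (μ/(1+x))*Real.cosh μ := by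
      have := sinh_sq_sum (x*μ/(1+x)) (μ/(1+x))
      rwa [hab] at this
    show hFun s μ x = _
    unfold hFun
    simp only [hΦ]
    set A := Real.sinh (x*μ/(1+x)) with hA'
    set B := Real.sinh (μ/(1+x)) with hB'
    congr 1
    field_simp
    linear_combination (-(μ * x)) * hS2
  -- eventual equality for the RHS
  have hev2 : (fun ρ' => ((ρ'*μ/(1+ρ')) / Real.sinh (ρ'*μ/(1+ρ'))) ^ (1 - s)
            * ((μ/(1+ρ')) / Real.sinh (μ/(1+ρ'))) ^ (1 + s))
      =ᶠ[nhds ρ] (fun x => x^(-s) * w x * Φ x) := by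
    filter_upwards [eventually_gt_nhds hρ] with x hx
    have h1x : (0:ℝ) < 1 + x := by linarith
    have hax : 0 < x*μ/(1+x) := by positivity
    have hbx : 0 < μ/(1+x) := by positivity
    have hA : 0 < Real.sinh (x*μ/(1+x)) := Real.sinh_pos_iff.mpr hax
    have hB : 0 < Real.sinh (μ/(1+x)) := Real.sinh_pos_iff.mpr hbx
    have := E2aux s x (x*μ/(1+x)) (μ/(1+x)) (Real.sinh (x*μ/(1+x))) (Real.sinh (μ/(1+x)))
      hx hax hbx hA hB (by ring)
    simpa [hw, hΦ, mul_assoc] using this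
  -- derivatives
  have h1ρ : (0:ℝ) < 1 + ρ := by linarith
  have ha : 0 < ρ*μ/(1+ρ) := by positivity
  have hb : 0 < μ/(1+ρ) := by positivity
  have hA : 0 < Real.sinh (ρ*μ/(1+ρ)) := Real.sinh_pos_iff.mpr ha
  have hB : 0 < Real.sinh (μ/(1+ρ)) := Real.sinh_pos_iff.mpr hb
  have hd1 : HasDerivAt (fun x : ℝ => 1 + x) 1 ρ := by
    simpa using (hasDerivAt_id ρ).const_add 1
  have hda : HasDerivAt (fun x : ℝ => x*μ/(1+x)) (μ/(1+ρ)^2) ρ := by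
    have h := ((hasDerivAt_id ρ).mul_const μ).div hd1 h1ρ.ne'
    refine h.congr_deriv ?_
    simp only [id_eq]
    ring
  have hdb : HasDerivAt (fun x : ℝ => μ/(1+x)) (-(μ/(1+ρ)^2)) ρ := by
    have h := (hasDerivAt_const ρ μ).div hd1 h1ρ.ne'
    refine h.congr_deriv ?_
    ring
  have hdA := hda.sinh
  have hdB := hdb.sinh
  have hdg := hdA.div hdB hB.ne'
  have hdw := hdg.rpow_const (p := s) (Or.inl (div_pos hA hB).ne')
  have hdΦ := (hda.mul hdb).div (hdA.mul hdB) (mul_pos hA hB).ne'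
  have hdL := (hdw.const_mul (μ/Real.sinh μ)).mul ((hdΦ.const_mul (Real.sinh μ/μ)).sub_const 1)
  have hdR := ((Real.hasDerivAt_rpow_const (p := -s) (Or.inl hρ.ne')).mul hdw).mul hdΦ
  have e1 : deriv (fun x => μ / Real.sinh μ * w x * (Real.sinh μ / μ * Φ x - 1)) ρ = _ := hdL.deriv
  have e2 : deriv (fun x => x ^ (-s) * w x * Φ x) ρ = _ := hdR.deriv
  rw [hev1.deriv_eq, hev2.deriv_eq, e1, e2]
  simp only [Pi.div_apply, Pi.mul_apply]
  set X := (Real.sinh (ρ*μ/(1+ρ)) / Real.sinh (μ/(1+ρ))) ^ s with hX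
  have hab : ρ*μ/(1+ρ) + μ/(1+ρ) = μ := by field_simp; ring
  have hSadd : Real.sinh μ = Real.sinh (ρ*μ/(1+ρ)) * Real.cosh (μ/(1+ρ))
      + Real.cosh (ρ*μ/(1+ρ)) * Real.sinh (μ/(1+ρ)) := by
    have := Real.sinh_add (ρ*μ/(1+ρ)) (μ/(1+ρ))
    rw [hab] at this
    exact this
  refine final_alg _ _ _ _ _ _ _ _ _ _ _ hρ.ne' ?_ ?_ ?_ ?_
  · rw [← Real.rpow_add hρ]
    norm_num
  · rw [← Real.rpow_add hρ, show -s - 1 + s = -1 by ring, Real.rpow_neg_one, one_div]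
  · field_simp
  · rw [Real.rpow_sub (div_pos hA hB), Real.rpow_one, ← hX]
    field_simp
    rw [mul_comm μ ρ]
    linear_combination (-X) * hSadd
end

section
/- With h_{s,μ} as defined (for 0 < s < 1 and μ > 0), one has the algebraic identity: for every ρ > 0, ρ^s · ((ρμ/(1+ρ))/sinh(ρμ/(1+ρ)))^{1−s} · ((μ/(1+ρ))/sinh(μ/(1+ρ)))^{1+s} − h_{s,μ}(ρ) = (μ/sinh μ) · ( sinh(ρμ/(1+ρ)) / sinh(μ/(1+ρ)) )^s. -/
open Real

theorem stmt_6 (s μ : ℝ) (hs0 : 0 < s) (hs1 : s < 1) (hμ : 0 < μ) (ρ : ℝ) (hρ : 0 < ρ) :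
    ρ ^ s * ((ρ*μ/(1+ρ)) / Real.sinh (ρ*μ/(1+ρ))) ^ (1 - s)
        * ((μ/(1+ρ)) / Real.sinh (μ/(1+ρ))) ^ (1 + s) - hFun s μ ρ
      = (μ / Real.sinh μ) * (Real.sinh (ρ*μ/(1+ρ)) / Real.sinh (μ/(1+ρ))) ^ s := by
  have h1 : (0:ℝ) < 1 + ρ := by linarith
  set a := ρ*μ/(1+ρ) with hadef
  set b := μ/(1+ρ) with hbdef
  have ha : 0 < a := by positivity
  have hb : 0 < b := by positivity
  have hA : 0 < Real.sinh a := Real.sinh_pos_iff.2 ha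
  have hB : 0 < Real.sinh b := Real.sinh_pos_iff.2 hb
  have hM : 0 < Real.sinh μ := Real.sinh_pos_iff.2 hμ
  set A := Real.sinh a
  set B := Real.sinh b
  have hab : μ = a + b := by rw [hadef, hbdef, ← add_div, eq_div_iff h1.ne']; ring
  have key : Real.sinh μ ^ 2 = A^2 + B^2 + 2 * Real.cosh μ * A * B := by
    rw [hab, Real.sinh_add, Real.cosh_add]
    have h2 := Real.cosh_sq a
    have h3 := Real.cosh_sq b
    nlinarith [h2, h3]
  have hrho : ρ = a / b := by rw [eq_div_iff hb.ne', hadef, hbdef, mul_div_assoc]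
  have habμ : a * b * (1+ρ)^2 = ρ * μ^2 := by
    have e1 : a*(1+ρ) = ρ*μ := by rw [hadef]; exact div_mul_cancel₀ _ h1.ne'
    have e2 : b*(1+ρ) = μ := by rw [hbdef]; exact div_mul_cancel₀ _ h1.ne'
    linear_combination (b*(1+ρ))*e1 + ρ*μ*e2
  -- rpow reduction
  have main : ρ ^ s * (a / A) ^ (1-s) * (b / B) ^ (1+s)
      = (A/B)^s * (a*b/(A*B)) := by
    rw [hrho, Real.rpow_sub (by positivity), Real.rpow_one,
        Real.rpow_add (by positivity) 1 s, Real.rpow_one,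
        Real.div_rpow ha.le hb.le, Real.div_rpow ha.le hA.le,
        Real.div_rpow hb.le hB.le, Real.div_rpow hA.le hB.le]
    have h4 : a ^ s ≠ 0 := ne_of_gt (Real.rpow_pos_of_pos ha s)
    have h5 : b ^ s ≠ 0 := ne_of_gt (Real.rpow_pos_of_pos hb s)
    have h6 : A ^ s ≠ 0 := ne_of_gt (Real.rpow_pos_of_pos hA s)
    have h7 : B ^ s ≠ 0 := ne_of_gt (Real.rpow_pos_of_pos hB s)
    field_simp
  rw [main, hFun]
  rw [show Real.sinh (ρ*μ/(1+ρ)) = A from rfl, show Real.sinh (μ/(1+ρ)) = B from rfl]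
  have step : (μ/Real.sinh μ)*((μ/Real.sinh μ)*(ρ/(1+ρ)^2)*(A/B + 2*Real.cosh μ + B/A) - 1)
      = a*b/(A*B) - μ/Real.sinh μ := by
    field_simp
    linear_combination (-(μ^2*ρ))*key - (Real.sinh μ^2)*habμ
  linear_combination (-((A/B)^s))*step
end
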